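/- Let P_1 and P_2 be monic real polynomials of degrees d_1 and d_2 with all coefficients nonzero, having respectively pos_1, neg_1 and pos_2, neg_2 positive and negative roots counted with multiplicity. Then for all sufficiently small epsilon > 0, the polynomial epsilon^{d_2} P_1(x) P_2(x/epsilon) is a monic degree d_1+d_2 polynomial having exactly pos_1+pos_2 positive roots and neg_1+neg_2 negative roots counted with multiplicity. -/

import Mathlib

open Polynomial


lemma comp_C_mul_X_cancel {a : ℝ} (ha : a ≠ 0) (p : Polynomial ℝ) :
    (p.comp (C a * X)).comp (C a⁻¹ * X) = p := by
  rw [comp_assoc]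
  simp [mul_comp, ← mul_assoc, ← C_mul, mul_inv_cancel₀ ha]

lemma dvd_comp_iff {a x : ℝ} (ha : a ≠ 0) (p : Polynomial ℝ) (n : ℕ) :
    (X - C (a * x)) ^ n ∣ p ↔ (X - C x) ^ n ∣ p.comp (C a * X) := by
  constructor
  · rintro ⟨q, rfl⟩
    rw [mul_comp, pow_comp, sub_comp, X_comp, C_comp]
    have h2 : (C a * X - C (a * x)) = C a * (X - C x) := by
      rw [C_mul, mul_sub]
    rw [h2, mul_pow]
    exact dvd_mul_of_dvd_left (dvd_mul_left _ _) _
  · rintro ⟨q, hq⟩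
    have := congrArg (fun r => r.comp (C a⁻¹ * X)) hq
    simp only [comp_C_mul_X_cancel ha, mul_comp, pow_comp, sub_comp, X_comp, C_comp] at this
    have h2 : (C a⁻¹ * X - C x) = C a⁻¹ * (X - C (a * x)) := by
      rw [mul_sub, ← C_mul, inv_mul_cancel_left₀ ha]
    rw [h2, mul_pow] at this
    rw [this]
    exact dvd_mul_of_dvd_left (dvd_mul_left _ _) _

lemma comp_C_mul_X_ne_zero {a : ℝ} (ha : a ≠ 0) {p : Polynomial ℝ} (hp : p ≠ 0) :
    p.comp (C a * X) ≠ 0 := fun h => hp (by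
  have := comp_C_mul_X_cancel ha p
  rw [h, zero_comp] at this; exact this.symm)

lemma rootMult_comp {a : ℝ} (ha : a ≠ 0) {p : Polynomial ℝ} (hp : p ≠ 0) (x : ℝ) :
    rootMultiplicity x (p.comp (C a * X)) = rootMultiplicity (a * x) p := by
  have hc : p.comp (C a * X) ≠ 0 := comp_C_mul_X_ne_zero ha hp
  apply le_antisymm
  · rw [Polynomial.le_rootMultiplicity_iff hp, dvd_comp_iff ha]
    exact Polynomial.pow_rootMultiplicity_dvd _ _
  · rw [Polynomial.le_rootMultiplicity_iff hc, ← dvd_comp_iff ha]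
    exact Polynomial.pow_rootMultiplicity_dvd _ _

lemma roots_comp_C_mul_X {a : ℝ} (ha : a ≠ 0) (p : Polynomial ℝ) (hp : p ≠ 0) :
    (p.comp (C a * X)).roots = p.roots.map (fun r => a⁻¹ * r) := by
  have hc : p.comp (C a * X) ≠ 0 := comp_C_mul_X_ne_zero ha hp
  ext x
  have hinj : Function.Injective (fun r : ℝ => a⁻¹ * r) :=
    fun r s h => by field_simp at h; exact h
  have hx : x = a⁻¹ * (a * x) := by field_simp
  conv_rhs => rw [hx, Multiset.count_map_eq_count' _ _ hinj]
  rw [count_roots, count_roots, rootMult_comp ha hp]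


/-- Number of positive real roots counted with multiplicity. -/
noncomputable def posRoots (p : Polynomial ℝ) : ℕ :=
  (p.roots.filter (fun x => 0 < x)).card

/-- Number of negative real roots counted with multiplicity. -/
noncomputable def negRoots (p : Polynomial ℝ) : ℕ :=
  (p.roots.filter (fun x => x < 0)).card

theorem concatenation_roots (P₁ P₂ : Polynomial ℝ) (d₁ d₂ : ℕ)
    (hm₁ : P₁.Monic) (hm₂ : P₂.Monic)
    (hd₁ : P₁.natDegree = d₁) (hd₂ : P₂.natDegree = d₂)
    (hnz₁ : ∀ i ≤ d₁, P₁.coeff i ≠ 0) (hnz₂ : ∀ i ≤ d₂, P₂.coeff i ≠ 0) :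
    ∃ ε₀ > (0 : ℝ), ∀ ε : ℝ, 0 < ε → ε < ε₀ →
      let Q : Polynomial ℝ := C (ε ^ d₂) * (P₁ * P₂.comp (C ε⁻¹ * X))
      Q.Monic ∧ Q.natDegree = d₁ + d₂ ∧
        posRoots Q = posRoots P₁ + posRoots P₂ ∧
        negRoots Q = negRoots P₁ + negRoots P₂ := by
  refine ⟨1, one_pos, fun ε hε hε1 => ?_⟩
  intro Q
  have hεne : ε ≠ 0 := ne_of_gt hε
  have hinvne : (ε⁻¹ : ℝ) ≠ 0 := inv_ne_zero hεne
  have hP₁ : P₁ ≠ 0 := hm₁.ne_zero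
  have hP₂ : P₂ ≠ 0 := hm₂.ne_zero
  have hQc : P₂.comp (C ε⁻¹ * X) ≠ 0 := comp_C_mul_X_ne_zero hinvne hP₂
  have hlin : (C ε⁻¹ * X : Polynomial ℝ).natDegree = 1 := by
    simpa using natDegree_C_mul_X ε⁻¹ hinvne
  have hdQc : (P₂.comp (C ε⁻¹ * X)).natDegree = d₂ := by
    rw [natDegree_comp, hlin, hd₂, mul_one]
  have hlc : (P₂.comp (C ε⁻¹ * X)).leadingCoeff = ε⁻¹ ^ d₂ := by
    rw [leadingCoeff_comp (by rw [hlin]; exact one_ne_zero), hm₂.leadingCoeff, one_mul,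
      leadingCoeff_C_mul_X, hd₂]
  have hεd : (ε ^ d₂ : ℝ) ≠ 0 := pow_ne_zero _ hεne
  have hmonic : Q.Monic := by
    show Q.leadingCoeff = 1
    rw [leadingCoeff_mul, leadingCoeff_mul, leadingCoeff_C, hm₁.leadingCoeff, one_mul, hlc]
    field_simp
    rw [← mul_pow, mul_one_div_cancel hεne, one_pow]
  refine ⟨hmonic, ?_, ?_, ?_⟩
  · rw [natDegree_C_mul hεd, natDegree_mul hP₁ hQc, hd₁, hdQc]
  all_goals {
    have hroots : Q.roots = P₁.roots + P₂.roots.map (fun r => ε * r) := by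
      show (C (ε ^ d₂) * (P₁ * P₂.comp (C ε⁻¹ * X))).roots = _
      rw [roots_C_mul _ hεd, roots_mul (mul_ne_zero hP₁ hQc),
        roots_comp_C_mul_X hinvne P₂ hP₂, inv_inv]
    simp only [posRoots, negRoots, hroots, Multiset.filter_add, Multiset.card_add,
      Multiset.filter_map, Multiset.card_map]
    congr 1
    apply congrArg
    apply Multiset.filter_congr
    intro r _
    simp only [Function.comp_apply]
    constructor <;> intro h <;> nlinarith
  }
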